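/- Fix $x \ge 0$ and a non-increasing rate function $r:\mathbb{N}^*\to(0,1]$. The processor-sharing one-step map $\Phi^r(\cdot, x): \mu \mapsto \tau_{\gamma^r(\mu,x)}\mu$ is non-decreasing on finite counting measures for the partial integral order: $\mu \preceq \nu$ implies $\Phi^r(\mu,x) \preceq \Phi^r(\nu,x)$. -/

import Mathlib

open MeasureTheory Filter Topology

/-- The partial integral order `≼` on finite positive measures. -/
def IntOrder (μ ν : Measure ℝ) : Prop :=
  ∀ f : ℝ → ℝ, Measurable f → Monotone f → (∀ x, 0 ≤ f x) → (∃ C, ∀ x, f x ≤ C) →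
    ∫ x, f x ∂μ ≤ ∫ x, f x ∂ν

/-- The `i`-th smallest atom (1-based) of the finite counting measure represented by the
multiset `m`. -/
noncomputable def atom (m : Multiset ℝ) (i : ℕ) : ℝ :=
  (m.sort (· ≤ ·)).getD (i - 1) 0

/-- `γ_i^r(m, x)`. -/
noncomputable def gam (r : ℕ → ℝ) (m : Multiset ℝ) (x : ℝ) (i : ℕ) : ℝ :=
  r (Multiset.card m - i + 1) *
    (x - ∑ j ∈ Finset.Icc 1 (i - 1),
      atom m j * (1 / r (Multiset.card m - j + 1) - 1 / r (Multiset.card m - j)))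

open Classical in
/-- `i^r(m, x) = max {i ≤ N(m) : α_i(m) ≤ γ_i^r(m,x)}`, with `max ∅ = 0`. -/
noncomputable def irdx (r : ℕ → ℝ) (m : Multiset ℝ) (x : ℝ) : ℕ :=
  WithBot.unbotD 0 (((Finset.Icc 1 (Multiset.card m)).filter (fun i => atom m i ≤ gam r m x i)).max)

/-- `γ^r(m, x)`, the amount of attained service per customer by time `x`
(`0` for the empty profile). -/
noncomputable def gammaStar (r : ℕ → ℝ) (m : Multiset ℝ) (x : ℝ) : ℝ :=
  if m = 0 then 0 else gam r m x (min (irdx r m x + 1) (Multiset.card m))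

open Classical in
/-- The one-step processor-sharing map `Φ^r(·, x) = τ_{γ^r(·,x)}`. -/
noncomputable def PhiM (r : ℕ → ℝ) (m : Multiset ℝ) (x : ℝ) : Multiset ℝ :=
  (m.filter (fun a => gammaStar r m x < a)).map (fun a => a - gammaStar r m x)

/-- The counting measure associated to a multiset of atoms. -/
noncomputable def toMeas (m : Multiset ℝ) : Measure ℝ :=
  (m.map (fun a => (Measure.dirac a : Measure ℝ))).sum



section Meas
open MeasureTheory

lemma toMeas_zero : toMeas 0 = 0 := by simp [toMeas]

lemma toMeas_cons (a : ℝ) (m : Multiset ℝ) :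
    toMeas (a ::ₘ m) = Measure.dirac a + toMeas m := by
  simp [toMeas]

lemma integrable_toMeas {f : ℝ → ℝ} (hf : Measurable f) {C : ℝ} (hC : ∀ x, |f x| ≤ C)
    (m : Multiset ℝ) : Integrable f (toMeas m) := by
  induction m using Multiset.induction_on with
  | empty => simp [toMeas_zero]
  | cons a m ih =>
    rw [toMeas_cons]
    refine Integrable.add_measure ?_ ih
    exact (integrable_const C).mono' hf.aestronglyMeasurable
      (Filter.Eventually.of_forall (fun y => by simpa using hC y))

lemma integral_toMeas {f : ℝ → ℝ} (hf : Measurable f) {C : ℝ} (hC : ∀ x, |f x| ≤ C)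
    (m : Multiset ℝ) : ∫ y, f y ∂(toMeas m) = (m.map f).sum := by
  induction m using Multiset.induction_on with
  | empty => simp [toMeas_zero]
  | cons a m ih =>
    rw [toMeas_cons, integral_add_measure
      ((integrable_const C).mono' hf.aestronglyMeasurable
        (Filter.Eventually.of_forall (fun y => by simpa using hC y)))
      (integrable_toMeas hf hC m), integral_dirac, ih, Multiset.map_cons, Multiset.sum_cons]

end Meas

section Core
variable {r : ℕ → ℝ}

lemma telesc (f : ℕ → ℝ) : ∀ b a : ℕ, a ≤ b + 1 →
    ∑ j ∈ Finset.Icc a b, (f j - f (j+1)) = f a - f (b+1) := by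
  intro b
  induction b with
  | zero =>
    intro a ha
    interval_cases a
    · simp
    · simp
  | succ b ih =>
    intro a ha
    rcases Nat.lt_or_ge a (b+2) with h | h
    · have h1 : a ≤ b + 1 := by omega
      rw [Finset.sum_Icc_succ_top h1, ih a h1]
      ring
    · have : a = b + 2 := by omega
      subst this
      simp

lemma atom_getElem (m : Multiset ℝ) {j : ℕ} (h1 : 1 ≤ j) (h2 : j ≤ Multiset.card m) :
    atom m j = (m.sort (· ≤ ·))[j-1]'(by rw [Multiset.length_sort]; omega) := by
  rw [atom, List.getD_eq_getElem]

lemma atom_mem (m : Multiset ℝ) {j : ℕ} (h1 : 1 ≤ j) (h2 : j ≤ Multiset.card m) :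
    atom m j ∈ m := by
  rw [atom_getElem m h1 h2]
  have : (m.sort (· ≤ ·))[j-1]'(by rw [Multiset.length_sort]; omega) ∈ m.sort (· ≤ ·) :=
    List.getElem_mem _
  rwa [← Multiset.mem_sort (· ≤ ·)]

lemma atom_mono (m : Multiset ℝ) {j j' : ℕ} (h1 : 1 ≤ j) (h : j ≤ j') (h2 : j' ≤ Multiset.card m) :
    atom m j ≤ atom m j' := by
  rw [atom_getElem m h1 (le_trans h h2), atom_getElem m (le_trans h1 h) h2]
  have hs := Multiset.pairwise_sort m (· ≤ ·)
  have := hs.rel_get_of_le (a := ⟨j-1, by rw [Multiset.length_sort]; omega⟩)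
    (b := ⟨j'-1, by rw [Multiset.length_sort]; omega⟩) (by simp; omega)
  simpa using this

/-- The "time to reach attained service `g`" function, in descending-atom form. -/
noncomputable def Fof (r : ℕ → ℝ) (m : Multiset ℝ) (g : ℝ) : ℝ :=
  g / r 1 + ∑ k ∈ Finset.Icc 2 (Multiset.card m),
    min g (atom m (Multiset.card m - k + 1)) * (1 / r k - 1 / r (k-1))

variable (hr : ∀ n, 1 ≤ n → 0 < r n ∧ r n ≤ 1)
    (hrmono : ∀ p q, 1 ≤ p → p ≤ q → r q ≤ r p)

include hr hrmono in
lemma coef_nonneg {k : ℕ} (hk : 2 ≤ k) : (0:ℝ) ≤ 1 / r k - 1 / r (k-1) := by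
  have h1 := hr (k-1) (by omega)
  have h2 := hr k (by omega)
  have h3 := hrmono (k-1) k (by omega) (by omega)
  have : 1 / r (k-1) ≤ 1 / r k := by
    apply one_div_le_one_div_of_le h2.1 h3
  linarith

include hr hrmono in
lemma Fof_strictMono (m : Multiset ℝ) {g1 g2 : ℝ} (hg : g1 < g2) : Fof r m g1 < Fof r m g2 := by
  have hr1 := hr 1 le_rfl
  unfold Fof
  apply add_lt_add_of_lt_of_le
  · gcongr
    exact hr1.1
  · apply Finset.sum_le_sum
    intro k hk
    rw [Finset.mem_Icc] at hk
    apply mul_le_mul_of_nonneg_right _ (coef_nonneg hr hrmono hk.1)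
    exact min_le_min hg.le le_rfl

include hr hrmono in
lemma Fof_le {m n : Multiset ℝ} (hcard : Multiset.card m ≤ Multiset.card n)
    (hn : ∀ a ∈ n, (0:ℝ) ≤ a)
    (hβ : ∀ k, 2 ≤ k → k ≤ Multiset.card m →
      atom m (Multiset.card m - k + 1) ≤ atom n (Multiset.card n - k + 1))
    {g : ℝ} (hg : 0 ≤ g) : Fof r m g ≤ Fof r n g := by
  unfold Fof
  apply add_le_add_right
  calc ∑ k ∈ Finset.Icc 2 (Multiset.card m),
        min g (atom m (Multiset.card m - k + 1)) * (1 / r k - 1 / r (k-1))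
      ≤ ∑ k ∈ Finset.Icc 2 (Multiset.card m),
        min g (atom n (Multiset.card n - k + 1)) * (1 / r k - 1 / r (k-1)) := by
        apply Finset.sum_le_sum
        intro k hk
        rw [Finset.mem_Icc] at hk
        apply mul_le_mul_of_nonneg_right _ (coef_nonneg hr hrmono hk.1)
        exact min_le_min le_rfl (hβ k hk.1 hk.2)
    _ ≤ ∑ k ∈ Finset.Icc 2 (Multiset.card n),
        min g (atom n (Multiset.card n - k + 1)) * (1 / r k - 1 / r (k-1)) := by
        apply Finset.sum_le_sum_of_subset_of_nonneg
        · exact Finset.Icc_subset_Icc le_rfl hcard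
        · intro k hk _
          rw [Finset.mem_Icc] at hk
          apply mul_nonneg _ (coef_nonneg hr hrmono hk.1)
          exact le_min hg (hn _ (atom_mem n (by omega) (by omega)))

/-- Ascending-atom form of `Fof`. -/
lemma Fof_asc (m : Multiset ℝ) (g : ℝ) :
    Fof r m g = g / r 1 + ∑ j ∈ Finset.Icc 1 (Multiset.card m - 1),
      min g (atom m j) * (1 / r (Multiset.card m - j + 1) - 1 / r (Multiset.card m - j)) := by
  unfold Fof
  congr 1
  set N := Multiset.card m with hN
  apply Finset.sum_nbij' (i := fun k => N - k + 1) (j := fun j => N - j + 1)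
  · intro k hk; rw [Finset.mem_Icc] at hk ⊢; omega
  · intro j hj; rw [Finset.mem_Icc] at hj ⊢; omega
  · intro k hk; rw [Finset.mem_Icc] at hk; omega
  · intro j hj; rw [Finset.mem_Icc] at hj; omega
  · intro k hk
    rw [Finset.mem_Icc] at hk
    have e1 : N - (N - k + 1) + 1 = k := by omega
    have e2 : N - (N - k + 1) = k - 1 := by omega
    rw [e1, e2]

open Classical in
lemma irdx_spec (m : Multiset ℝ) (x : ℝ) :
    (irdx r m x = 0 ∨ (1 ≤ irdx r m x ∧ irdx r m x ≤ Multiset.card m ∧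
      atom m (irdx r m x) ≤ gam r m x (irdx r m x))) ∧
    (irdx r m x + 1 ≤ Multiset.card m →
      ¬ (atom m (irdx r m x + 1) ≤ gam r m x (irdx r m x + 1))) := by
  classical
  set Fs := (Finset.Icc 1 (Multiset.card m)).filter (fun i => atom m i ≤ gam r m x i) with hFs
  have hird : irdx r m x = WithBot.unbotD 0 Fs.max := rfl
  cases hmax : Fs.max with
  | bot =>
    have hempty : Fs = ∅ := Finset.max_eq_bot.mp hmax
    constructor
    · left; rw [hird, hmax]; rfl
    · intro h1 h2
      have : irdx r m x + 1 ∈ Fs := by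
        rw [hFs, Finset.mem_filter, Finset.mem_Icc]
        exact ⟨⟨by omega, h1⟩, h2⟩
      rw [hempty] at this; exact absurd this (Finset.notMem_empty _)
  | coe a =>
    have ha : a ∈ Fs := Finset.mem_of_max hmax
    have hia : irdx r m x = a := by rw [hird, hmax]; rfl
    rw [hFs, Finset.mem_filter, Finset.mem_Icc] at ha
    constructor
    · right; rw [hia]; exact ⟨ha.1.1, ha.1.2, ha.2⟩
    · intro h1 h2
      have hmem : irdx r m x + 1 ∈ Fs := by
        rw [hFs, Finset.mem_filter, Finset.mem_Icc]
        exact ⟨⟨by omega, h1⟩, h2⟩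
      have := Finset.le_max hmem
      rw [hmax] at this
      have : irdx r m x + 1 ≤ a := by exact_mod_cast this
      omega

include hr in
/-- The recurrence step: if customer `i` can be fully served then `γ_{i+1} ≥ α_i`. -/
lemma gam_succ_ge (m : Multiset ℝ) (x : ℝ) {i : ℕ} (h1 : 1 ≤ i) (h2 : i < Multiset.card m)
    (h : atom m i ≤ gam r m x i) : atom m i ≤ gam r m x (i+1) := by
  set N := Multiset.card m with hN
  obtain ⟨i', rfl⟩ : ∃ i', i = i' + 1 := ⟨i - 1, by omega⟩
  set α := atom m (i'+1) with hα
  set S := ∑ j ∈ Finset.Icc 1 i', atom m j * (1 / r (N - j + 1) - 1 / r (N - j)) with hS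
  have hsum : ∑ j ∈ Finset.Icc 1 (i'+1), atom m j * (1 / r (N - j + 1) - 1 / r (N - j))
      = S + α * (1 / r (N - (i'+1) + 1) - 1 / r (N - (i'+1))) := by
    rw [Finset.sum_Icc_succ_top (by omega), hS]
  have e1 : N - (i'+1) + 1 = N - i' := by omega
  have e2 : N - (i'+2) + 1 = N - (i'+1) := by omega
  have hgam1 : gam r m x (i'+1) = r (N - i') * (x - S) := by
    rw [gam, ← hN, e1]; congr 1
  have hgam2 : gam r m x (i'+2) = r (N - (i'+1)) * (x - S - α * (1 / r (N - i') - 1 / r (N - (i'+1)))) := by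
    rw [gam, ← hN, e2]
    congr 1
    have : (i' + 2) - 1 = i' + 1 := by omega
    rw [this, hsum, e1]
    ring
  have hru := hr (N - i') (by omega)
  have hrv := hr (N - (i'+1)) (by omega)
  rw [hgam1] at h
  rw [hgam2]
  have key : α / r (N - i') ≤ x - S := by
    rw [div_le_iff₀ hru.1]
    calc α ≤ r (N - i') * (x - S) := h
    _ = (x - S) * r (N - i') := by ring
  have expand : r (N - (i'+1)) * (x - S - α * (1 / r (N - i') - 1 / r (N - (i'+1))))
      = r (N - (i'+1)) * ((x - S) - α / r (N - i')) + α := by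
    have h1 := hru.1.ne'
    have h2 := hrv.1.ne'
    field_simp
    ring
  rw [expand]
  nlinarith [hrv.1, sub_nonneg.mpr key]

include hr in
lemma gammaStar_spec (m : Multiset ℝ) (hm0 : m ≠ 0) (hm : ∀ a ∈ m, (0:ℝ) ≤ a)
    {x : ℝ} (hx : 0 ≤ x) :
    Fof r m (gammaStar r m x) = x ∧ 0 ≤ gammaStar r m x := by
  set N := Multiset.card m with hN
  have hN1 : 1 ≤ N := by
    rw [hN]; exact Multiset.card_pos.mpr hm0
  set i0 := irdx r m x with hi0
  set I := min (i0 + 1) N with hI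
  have hgdef : gammaStar r m x = gam r m x I := by rw [gammaStar, if_neg hm0]
  obtain ⟨hspec1, hspec2⟩ := irdx_spec (r := r) m x
  have hI1 : 1 ≤ I := by omega
  have hIN : I ≤ N := by omega
  have hprops : (∀ j, 1 ≤ j → j ≤ I - 1 → atom m j ≤ gam r m x I) ∧
      (∀ j, I ≤ j → j ≤ N - 1 → gam r m x I ≤ atom m j) ∧ 0 ≤ gam r m x I := by
    rcases hspec1 with h0 | ⟨h1, h2, h3⟩
    · -- i0 = 0, I = 1
      have hIeq : I = 1 := by omega
      have hgam1 : gam r m x I = r N * x := by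
        rw [hIeq, gam, ← hN]
        have : N - 1 + 1 = N := by omega
        rw [this]
        simp
      refine ⟨fun j hj1 hj2 => by omega, fun j hj1 hj2 => ?_, ?_⟩
      · have hlt : ¬ (atom m (i0 + 1) ≤ gam r m x (i0 + 1)) := hspec2 (by omega)
        have h01 : i0 + 1 = 1 := by omega
        rw [h01] at hlt
        push_neg at hlt
        rw [hIeq]
        calc gam r m x 1 ≤ atom m 1 := hlt.le
          _ ≤ atom m j := atom_mono m le_rfl (by omega) (by omega)
      · rw [hgam1]
        exact mul_nonneg (hr N hN1).1.le hx
    · rcases Nat.lt_or_ge i0 N with hlt | hge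
      · -- 1 ≤ i0 < N, I = i0 + 1
        have hIeq : I = i0 + 1 := by omega
        have hkey : atom m i0 ≤ gam r m x (i0 + 1) := gam_succ_ge hr m x h1 hlt h3
        refine ⟨fun j hj1 hj2 => ?_, fun j hj1 hj2 => ?_, ?_⟩
        · rw [hIeq]
          calc atom m j ≤ atom m i0 := atom_mono m hj1 (by omega) (by omega)
            _ ≤ gam r m x (i0 + 1) := hkey
        · have hnle : ¬ (atom m (i0 + 1) ≤ gam r m x (i0 + 1)) := hspec2 (by omega)
          push_neg at hnle
          rw [hIeq]
          calc gam r m x (i0 + 1) ≤ atom m (i0 + 1) := hnle.le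
            _ ≤ atom m j := atom_mono m (by omega) (by omega) (by omega)
        · rw [hIeq]
          exact le_trans (hm _ (atom_mem m h1 (by omega))) hkey
      · -- i0 = N, I = N
        have hIeq : I = N := by omega
        have hi0N : i0 = N := by omega
        have e : irdx r m x = N := by omega
        rw [e] at h3
        refine ⟨fun j hj1 hj2 => ?_, fun j hj1 hj2 => by omega, ?_⟩
        · rw [hIeq]
          calc atom m j ≤ atom m N := atom_mono m hj1 (by omega) le_rfl
            _ ≤ gam r m x N := h3
        · rw [hIeq]
          exact le_trans (hm _ (atom_mem m (by omega) le_rfl)) h3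
  obtain ⟨ha, hb, hg0⟩ := hprops
  rw [hgdef]
  refine ⟨?_, hg0⟩
  set g := gam r m x I with hgI
  rw [Fof_asc, ← hN]
  have hset : Finset.Icc 1 (N - 1) = Finset.Icc 1 (I - 1) ∪ Finset.Icc I (N - 1) := by
    ext j
    simp only [Finset.mem_Icc, Finset.mem_union]
    omega
  have hdisj : Disjoint (Finset.Icc 1 (I - 1)) (Finset.Icc I (N - 1)) := by
    rw [Finset.disjoint_left]
    intro j hj hj'
    rw [Finset.mem_Icc] at hj hj'
    omega
  rw [hset, Finset.sum_union hdisj]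
  have hfirst : ∑ j ∈ Finset.Icc 1 (I - 1),
      min g (atom m j) * (1 / r (N - j + 1) - 1 / r (N - j))
      = ∑ j ∈ Finset.Icc 1 (I - 1),
        atom m j * (1 / r (N - j + 1) - 1 / r (N - j)) := by
    apply Finset.sum_congr rfl
    intro j hj
    rw [Finset.mem_Icc] at hj
    rw [min_eq_right (ha j hj.1 hj.2)]
  have hsecond : ∑ j ∈ Finset.Icc I (N - 1),
      min g (atom m j) * (1 / r (N - j + 1) - 1 / r (N - j))
      = g * (1 / r (N - I + 1) - 1 / r 1) := by
    have e1 : ∀ j ∈ Finset.Icc I (N - 1),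
        min g (atom m j) * (1 / r (N - j + 1) - 1 / r (N - j))
        = g * ((fun j => 1 / r (N - j + 1)) j - (fun j => 1 / r (N - j + 1)) (j + 1)) := by
      intro j hj
      rw [Finset.mem_Icc] at hj
      have e2 : N - (j + 1) + 1 = N - j := by omega
      simp only [e2]
      rw [min_eq_left (hb j hj.1 hj.2)]
    rw [Finset.sum_congr rfl e1, ← Finset.mul_sum,
      telesc (fun j => 1 / r (N - j + 1)) (N - 1) I (by omega)]
    have e3 : N - 1 + 1 = N := by omega
    have e4 : N - N + 1 = 1 := by omega
    simp only [e3, e4]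
  rw [hfirst, hsecond]
  set S := ∑ j ∈ Finset.Icc 1 (I - 1),
      atom m j * (1 / r (N - j + 1) - 1 / r (N - j)) with hS
  have hgval : g = r (N - I + 1) * (x - S) := by
    rw [hgI, gam, ← hN]
  have hrI := hr (N - I + 1) (by omega)
  have hr1 := hr 1 le_rfl
  have : g * (1 / r (N - I + 1)) = x - S := by
    rw [hgval, mul_one_div, mul_div_cancel_left₀ _ hrI.1.ne']
  have expand : g / r 1 + (S + g * (1 / r (N - I + 1) - 1 / r 1))
      = S + g * (1 / r (N - I + 1)) := by
    field_simp
    ring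
  rw [expand, this]
  ring

end Core


section Cnt

noncomputable def cnt (m : Multiset ℝ) (t : ℝ) : ℕ :=
  ((m.sort (· ≤ ·)).filter (fun a => decide (t < a))).length

open List in
lemma L1 {ℓ : List ℝ} (hs : ℓ.Pairwise (· ≤ ·)) {i : ℕ} (hi : i < ℓ.length) {t : ℝ}
    (ht : t < ℓ[i]) : ℓ.length - i ≤ (ℓ.filter (fun a => decide (t < a))).length := by
  have h1 : (ℓ.drop i).filter (fun a => decide (t < a)) = ℓ.drop i := by
    rw [List.filter_eq_self]
    intro b hb
    rcases List.mem_iff_getElem.mp hb with ⟨j, hj, rfl⟩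
    have hj' : i + j < ℓ.length := by simp [List.length_drop] at hj; omega
    simp only [List.getElem_drop]
    have : ℓ[i] ≤ ℓ[i + j] := by
      have := hs.rel_get_of_le (a := ⟨i, hi⟩) (b := ⟨i + j, hj'⟩) (by simp)
      simpa using this
    exact decide_eq_true (lt_of_lt_of_le ht this)
  calc ℓ.length - i = (ℓ.drop i).length := List.length_drop.symm
    _ = ((ℓ.drop i).filter (fun a => decide (t < a))).length := by rw [h1]
    _ ≤ (ℓ.filter (fun a => decide (t < a))).length :=
        ((List.drop_sublist i ℓ).filter _).length_le

open List in
lemma L2 {ℓ : List ℝ} (hs : ℓ.Pairwise (· ≤ ·)) {i : ℕ} (hi : i < ℓ.length) {t : ℝ}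
    (ht : ℓ[i] ≤ t) :
    (ℓ.filter (fun a => decide (t < a))).length ≤ ℓ.length - (i + 1) := by
  have h1 : (ℓ.take (i+1)).filter (fun a => decide (t < a)) = [] := by
    rw [List.filter_eq_nil_iff]
    intro b hb
    rcases List.mem_iff_getElem.mp hb with ⟨j, hj, rfl⟩
    have hj1 : j < i + 1 := lt_of_lt_of_le hj (by simp [List.length_take])
    have hjl : j < ℓ.length := by simp [List.length_take] at hj; omega
    have h2 : (ℓ.take (i+1))[j] = ℓ[j] := List.getElem_take ..
    rw [h2]
    have : ℓ[j] ≤ ℓ[i] := by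
      have := hs.rel_get_of_le (a := ⟨j, hjl⟩) (b := ⟨i, hi⟩) (by simp; omega)
      simpa using this
    simp [not_lt.mpr (le_trans this ht)]
  have hlen : (ℓ.filter (fun a => decide (t < a))).length
      = ((ℓ.take (i+1)).filter (fun a => decide (t < a))).length
        + ((ℓ.drop (i+1)).filter (fun a => decide (t < a))).length := by
    conv_lhs => rw [← List.take_append_drop (i+1) ℓ]
    rw [List.filter_append, List.length_append]
  rw [hlen, h1]
  simpa using le_trans (List.length_filter_le _ _) (le_of_eq List.length_drop)

lemma sum_indicator_list (t : ℝ) (ℓ : List ℝ) :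
    ((ℓ.map (Set.indicator (Set.Ioi t) (fun _ => (1:ℝ)))).sum)
      = ((ℓ.filter (fun a => decide (t < a))).length : ℝ) := by
  induction ℓ with
  | nil => simp
  | cons a ℓ ih =>
    by_cases hta : t < a
    · simp [List.filter_cons, hta, Set.indicator_of_mem (Set.mem_Ioi.mpr hta), ih]
      ring
    · simp [List.filter_cons, hta,
        Set.indicator_of_notMem (show a ∉ Set.Ioi t by simpa using hta), ih]

lemma sum_indicator (t : ℝ) (m : Multiset ℝ) :
    ((m.map (Set.indicator (Set.Ioi t) (fun _ => (1:ℝ)))).sum) = (cnt m t : ℝ) := by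
  rw [cnt, ← sum_indicator_list]
  conv_rhs => rw [← Multiset.sum_coe, ← Multiset.map_coe, Multiset.sort_eq]

/-- From count domination, comparison of the `k`-th largest atoms. -/
lemma atom_desc_le {m n : Multiset ℝ} (hcard : Multiset.card m ≤ Multiset.card n)
    (hcnt : ∀ t, cnt m t ≤ cnt n t) {k : ℕ} (hk1 : 1 ≤ k) (hk2 : k ≤ Multiset.card m) :
    atom m (Multiset.card m - k + 1) ≤ atom n (Multiset.card n - k + 1) := by
  set N := Multiset.card m with hN
  set M := Multiset.card n with hM
  by_contra hcon
  push_neg at hcon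
  set t := atom n (M - k + 1) with ht
  have hlenm : (m.sort (· ≤ ·)).length = N := by rw [Multiset.length_sort]
  have hlenn : (n.sort (· ≤ ·)).length = M := by rw [Multiset.length_sort]
  have hkM : k ≤ M := le_trans hk2 hcard
  have hgm : atom m (N - k + 1) = (m.sort (· ≤ ·))[N - k]'(by omega) := by
    have := atom_getElem m (j := N - k + 1) (by omega) (by omega)
    simpa [show N - k + 1 - 1 = N - k by omega] using this
  have hgn : t = (n.sort (· ≤ ·))[M - k]'(by omega) := by
    have := atom_getElem n (j := M - k + 1) (by omega) (by omega)
    simpa [show M - k + 1 - 1 = M - k by omega] using this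
  have hm1 : N - (N - k) ≤ cnt m t := by
    rw [cnt]
    have := L1 (Multiset.pairwise_sort m (· ≤ ·)) (i := N - k) (by omega)
      (t := t) (by rw [← hgm]; exact hcon)
    simpa [hlenm] using this
  have hn1 : cnt n t ≤ M - (M - k + 1) := by
    rw [cnt]
    have := L2 (Multiset.pairwise_sort n (· ≤ ·)) (i := M - k) (by omega)
      (t := t) (by rw [hgn])
    simpa [hlenn] using this
  have := hcnt t
  omega

lemma filter_map_sum (p : ℝ → Prop) [DecidablePred p] (q : ℝ → ℝ) (s : Multiset ℝ) :
    ((s.filter p).map q).sum = (s.map (fun a => if p a then q a else 0)).sum := by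
  induction s using Multiset.induction_on with
  | empty => simp
  | cons a s ih =>
    by_cases hpa : p a
    · rw [Multiset.filter_cons_of_pos _ hpa, Multiset.map_cons, Multiset.sum_cons, ih,
        Multiset.map_cons, Multiset.sum_cons, if_pos hpa]
    · rw [Multiset.filter_cons_of_neg _ hpa, ih, Multiset.map_cons, Multiset.sum_cons,
        if_neg hpa, zero_add]

end Cnt


/-- Monotonicity of the processor-sharing one-step map `Φ^r(·, x)` for the partial
integral order. -/
theorem stmt13 (r : ℕ → ℝ) (hr : ∀ n, 1 ≤ n → 0 < r n ∧ r n ≤ 1)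
    (hrmono : ∀ p q, 1 ≤ p → p ≤ q → r q ≤ r p)
    (x : ℝ) (hx : 0 ≤ x)
    (m n : Multiset ℝ) (hm : ∀ a ∈ m, (0:ℝ) ≤ a) (hn : ∀ a ∈ n, (0:ℝ) ≤ a)
    (h : IntOrder (toMeas m) (toMeas n)) :
    IntOrder (toMeas (PhiM r m x)) (toMeas (PhiM r n x)) := by
  classical
  by_cases hm0 : m = 0
  · subst hm0
    intro f hfm hfmono hf0 hfb
    obtain ⟨C, hC⟩ := hfb
    have habs : ∀ y, |f y| ≤ C := fun y => abs_le.mpr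
      ⟨le_trans (by linarith [hf0 y, hC y]) (hf0 y), hC y⟩
    have hzero : PhiM r (0 : Multiset ℝ) x = 0 := by simp [PhiM]
    rw [hzero, show toMeas 0 = 0 from toMeas_zero, integral_zero_measure,
      integral_toMeas hfm habs]
    apply Multiset.sum_nonneg
    intro b hb
    rcases Multiset.mem_map.mp hb with ⟨a, _, rfl⟩
    exact hf0 a
  · -- main case
    have hcard : Multiset.card m ≤ Multiset.card n := by
      have h1 := h (fun _ => 1) measurable_const monotone_const (by norm_num) ⟨1, fun _ => le_rfl⟩
      rw [integral_toMeas measurable_const (C := 1) (by norm_num) m,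
        integral_toMeas measurable_const (C := 1) (by norm_num) n] at h1
      simp only [Multiset.map_const', Multiset.sum_replicate, nsmul_eq_mul, mul_one] at h1
      exact_mod_cast h1
    have hn0 : n ≠ 0 := by
      intro h0
      apply hm0
      rw [← Multiset.card_eq_zero]
      rw [h0] at hcard
      simpa using hcard
    have hcnt : ∀ t, cnt m t ≤ cnt n t := by
      intro t
      set f : ℝ → ℝ := Set.indicator (Set.Ioi t) (fun _ => (1:ℝ)) with hf
      have hfm' : Measurable f := measurable_const.indicator measurableSet_Ioi
      have hfmono : Monotone f := by
        intro a b hab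
        by_cases hta : t < a
        · rw [hf, Set.indicator_of_mem (Set.mem_Ioi.mpr hta),
            Set.indicator_of_mem (Set.mem_Ioi.mpr (lt_of_lt_of_le hta hab))]
        · rw [hf, Set.indicator_of_notMem (show a ∉ Set.Ioi t by simpa using hta)]
          by_cases htb : t < b
          · rw [Set.indicator_of_mem (Set.mem_Ioi.mpr htb)]; norm_num
          · rw [Set.indicator_of_notMem (show b ∉ Set.Ioi t by simpa using htb)]
      have hf0 : ∀ y, 0 ≤ f y := fun y => Set.indicator_nonneg (fun _ _ => by norm_num) y
      have hfb : ∀ y, f y ≤ 1 := fun y => Set.indicator_le' (fun _ _ => le_rfl)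
        (fun _ _ => by norm_num) y
      have h1 := h f hfm' hfmono hf0 ⟨1, hfb⟩
      have habs : ∀ y, |f y| ≤ 1 := fun y => abs_le.mpr ⟨by linarith [hf0 y], hfb y⟩
      rw [integral_toMeas hfm' habs m, integral_toMeas hfm' habs n,
        sum_indicator t m, sum_indicator t n] at h1
      exact_mod_cast h1
    have hβ : ∀ k, 2 ≤ k → k ≤ Multiset.card m →
        atom m (Multiset.card m - k + 1) ≤ atom n (Multiset.card n - k + 1) :=
      fun k hk1 hk2 => atom_desc_le hcard hcnt (by omega) hk2
    obtain ⟨hFm, hγm0⟩ := gammaStar_spec hr m hm0 hm hx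
    obtain ⟨hFn, hγn0⟩ := gammaStar_spec hr n hn0 hn hx
    set γm := gammaStar r m x with hγm
    set γn := gammaStar r n x with hγn
    have hγle : γn ≤ γm := by
      by_contra hcon
      push_neg at hcon
      have h1 : Fof r m γm < Fof r m γn := Fof_strictMono hr hrmono m hcon
      have h2 : Fof r m γn ≤ Fof r n γn := Fof_le hr hrmono hcard hn hβ hγn0
      rw [hFm, hFn] at *
      linarith
    -- conclude
    intro f hfm' hfmono hf0 hfb
    obtain ⟨C, hC⟩ := hfb
    have hC0 : (0:ℝ) ≤ C := le_trans (hf0 0) (hC 0)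
    have habs : ∀ y, |f y| ≤ C := fun y => abs_le.mpr ⟨by linarith [hf0 y], hC y⟩
    set gm : ℝ → ℝ := fun a => if γm < a then f (a - γm) else 0 with hgm
    set gn : ℝ → ℝ := fun a => if γn < a then f (a - γn) else 0 with hgn
    have hgnm : Measurable gn := by
      have : gn = Set.indicator (Set.Ioi γn) (fun a => f (a - γn)) := by
        funext a
        by_cases hne : γn < a
        · rw [hgn]
          simp only [if_pos hne, Set.indicator_of_mem (Set.mem_Ioi.mpr hne)]
        · rw [hgn]
          simp only [if_neg hne,
            Set.indicator_of_notMem (show a ∉ Set.Ioi γn by simpa using hne)]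
      rw [this]
      exact (hfm'.comp (measurable_id.sub_const γn)).indicator measurableSet_Ioi
    have hgnmono : Monotone gn := by
      intro a b hab
      rw [hgn]
      simp only
      by_cases hna : γn < a
      · rw [if_pos hna, if_pos (lt_of_lt_of_le hna hab)]
        exact hfmono (by linarith)
      · rw [if_neg hna]
        by_cases hnb : γn < b
        · rw [if_pos hnb]; exact hf0 _
        · rw [if_neg hnb]
    have hgn0 : ∀ y, 0 ≤ gn y := by
      intro y
      rw [hgn]
      simp only
      split
      · exact hf0 _
      · exact le_rfl
    have hgnb : ∀ y, gn y ≤ C := by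
      intro y
      rw [hgn]
      simp only
      split
      · exact hC _
      · exact hC0
    have hgnabs : ∀ y, |gn y| ≤ C := fun y => abs_le.mpr ⟨by linarith [hgn0 y], hgnb y⟩
    have hsum : ∀ (s : Multiset ℝ) (γ : ℝ),
        (((s.filter (fun a => γ < a)).map (fun a => a - γ)).map f).sum
          = (s.map (fun a => if γ < a then f (a - γ) else 0)).sum := by
      intro s γ
      rw [Multiset.map_map]
      exact filter_map_sum (fun a => γ < a) (fun a => f (a - γ)) s
    rw [integral_toMeas hfm' habs, integral_toMeas hfm' habs, PhiM, PhiM]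
    rw [← hγm, ← hγn, hsum m γm, hsum n γn]
    have step1 : (m.map (fun a => if γm < a then f (a - γm) else 0)).sum
        ≤ (m.map gn).sum := by
      apply Multiset.sum_map_le_sum_map
      intro a _
      by_cases hma : γm < a
      · rw [if_pos hma, hgn]
        simp only
        rw [if_pos (lt_of_le_of_lt hγle hma)]
        exact hfmono (by linarith)
      · rw [if_neg hma]
        exact hgn0 a
    have step2 : (m.map gn).sum ≤ (n.map gn).sum := by
      have h2 := h gn hgnm hgnmono hgn0 ⟨C, hgnb⟩
      rwa [integral_toMeas hgnm hgnabs m, integral_toMeas hgnm hgnabs n] at h2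
    calc (m.map (fun a => if γm < a then f (a - γm) else 0)).sum
        ≤ (m.map gn).sum := step1
      _ ≤ (n.map gn).sum := step2
      _ = (n.map (fun a => if γn < a then f (a - γn) else 0)).sum := rfl
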